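/- Let X and Y be T0 spaces and f : X → Y a continuous map. If A ⊆ X is a Rudin set, then the closure of f(A) in Y is a Rudin set. -/

import Mathlib

open Set

universe u

variable {α : Type u}

/-- The specialization order used in the paper: `x ≤ y` iff `x ∈ closure {y}`. -/
def specLE [TopologicalSpace α] (x y : α) : Prop := x ∈ closure ({y} : Set α)

/-- `↑x = {y | x ≤ y}` in the specialization order. -/
def upOf [TopologicalSpace α] (x : α) : Set α := {y | specLE x y}

/-- `↑F = {y | ∃ a ∈ F, a ≤ y}` in the specialization order. -/
def upSetOf [TopologicalSpace α] (F : Set α) : Set α := {y | ∃ a ∈ F, specLE a y}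

/-- `↓B = {x | ∃ b ∈ B, x ≤ b}` in the specialization order. -/
def downOf [TopologicalSpace α] (B : Set α) : Set α := {x | ∃ b ∈ B, specLE x b}

/-- A set directed with respect to the specialization order: nonempty, and any two
elements have an upper bound in it. -/
def SDirected [TopologicalSpace α] (D : Set α) : Prop :=
  D.Nonempty ∧ ∀ a ∈ D, ∀ b ∈ D, ∃ c ∈ D, specLE a c ∧ specLE b c

/-- `s` is a supremum (least upper bound) of `D` in the specialization order. -/
def SIsSup [TopologicalSpace α] (D : Set α) (s : α) : Prop :=
  (∀ d ∈ D, specLE d s) ∧ ∀ t : α, (∀ d ∈ D, specLE d t) → specLE s t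

/-- Upper set (= saturated set) in the specialization order. -/
def SUpper [TopologicalSpace α] (A : Set α) : Prop :=
  ∀ ⦃x y : α⦄, x ∈ A → specLE x y → y ∈ A

/-- Scott open set with respect to the specialization order. -/
def SScottOpen [TopologicalSpace α] (U : Set α) : Prop :=
  SUpper U ∧ ∀ D : Set α, SDirected D → ∀ s : α, SIsSup D s → s ∈ U → (D ∩ U).Nonempty

/-- A d-space: a dcpo under the specialization order, all open sets Scott open. -/
def IsDSpace (α : Type u) [TopologicalSpace α] : Prop :=
  (∀ D : Set α, SDirected D → ∃ s : α, SIsSup D s) ∧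
    ∀ U : Set α, IsOpen U → SScottOpen U

/-- Member of `K(X)`: nonempty, compact and saturated. -/
def IsKSet [TopologicalSpace α] (K : Set α) : Prop :=
  K.Nonempty ∧ IsCompact K ∧ SUpper K

/-- A filtered family of sets: nonempty, and any two members contain a common member. -/
def FilteredFam (𝒦 : Set (Set α)) : Prop :=
  𝒦.Nonempty ∧ ∀ K1 ∈ 𝒦, ∀ K2 ∈ 𝒦, ∃ K3 ∈ 𝒦, K3 ⊆ K1 ∩ K2

/-- Well-filtered space: for every filtered family of nonempty compact saturated sets whose
intersection is contained in an open `U`, some member is contained in `U`. -/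
def IsWellFiltered (α : Type u) [TopologicalSpace α] : Prop :=
  ∀ 𝒦 : Set (Set α), (∀ K ∈ 𝒦, IsKSet K) → FilteredFam 𝒦 →
    ∀ U : Set α, IsOpen U → ⋂₀ 𝒦 ⊆ U → ∃ K ∈ 𝒦, K ⊆ U

/-- Rudin set: a nonempty set `A` such that for some filtered family `𝒦 ⊆ K(X)`,
`closure A` is a minimal closed set meeting every member of `𝒦`. -/
def IsRudin [TopologicalSpace α] (A : Set α) : Prop :=
  A.Nonempty ∧ ∃ 𝒦 : Set (Set α), (∀ K ∈ 𝒦, IsKSet K) ∧ FilteredFam 𝒦 ∧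
    (∀ K ∈ 𝒦, (closure A ∩ K).Nonempty) ∧
    ∀ B : Set α, IsClosed B → B ⊆ closure A → (∀ K ∈ 𝒦, (B ∩ K).Nonempty) → B = closure A

/-- Well-filtered determined set: every continuous map into a well-filtered T0 space sends it
to a set whose closure is the closure of a unique point. -/
def IsWFD [TopologicalSpace α] (A : Set α) : Prop :=
  ∀ (Y : Type u) [TopologicalSpace Y] [T0Space Y], IsWellFiltered Y →
    ∀ f : α → Y, Continuous f → ∃! y : Y, closure (f '' A) = closure ({y} : Set Y)

/-- Irreducible set. -/
def IsIrred [TopologicalSpace α] (A : Set α) : Prop :=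
  A.Nonempty ∧ ∀ F1 F2 : Set α, IsClosed F1 → IsClosed F2 → A ⊆ F1 ∪ F2 → A ⊆ F1 ∨ A ⊆ F2

/-- Sober space: every irreducible closed set is the closure of a unique point. -/
def IsSober (α : Type u) [TopologicalSpace α] : Prop :=
  ∀ A : Set α, IsClosed A → IsIrred A → ∃! x : α, A = closure ({x} : Set α)

/-- `A` has a maximal element with respect to the specialization order. -/
def HasMaxElem [TopologicalSpace α] (A : Set α) : Prop :=
  ∃ m ∈ A, ∀ a ∈ A, specLE m a → a = m

/-- Strong d-space. -/
def IsStrongDSpace (α : Type u) [TopologicalSpace α] : Prop :=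
  ∀ D : Set α, SDirected D → ∀ x : α, ∀ U : Set α, IsOpen U →
    (⋂ d ∈ D, upOf d) ∩ upOf x ⊆ U → ∃ d ∈ D, upOf d ∩ upOf x ⊆ U

lemma specLE_refl [TopologicalSpace α] (x : α) : specLE x x := subset_closure rfl

lemma specLE_trans [TopologicalSpace α] {x y z : α} (h1 : specLE x y) (h2 : specLE y z) :
    specLE x z := by
  have : closure ({y} : Set α) ⊆ closure ({z} : Set α) :=
    closure_minimal (singleton_subset_iff.mpr h2) isClosed_closure
  exact this h1

lemma isOpen_upper [TopologicalSpace α] {U : Set α} (hU : IsOpen U) : SUpper U := by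
  intro x y hx hxy
  rcases (mem_closure_iff.mp hxy) U hU hx with ⟨z, hzU, hz⟩
  rwa [← hz]

lemma subset_upSetOf [TopologicalSpace α] (S : Set α) : S ⊆ upSetOf S :=
  fun a ha => ⟨a, ha, specLE_refl a⟩

lemma upSetOf_subset_open [TopologicalSpace α] {S U : Set α} (hU : IsOpen U) (h : S ⊆ U) :
    upSetOf S ⊆ U := by
  rintro y ⟨a, haS, hay⟩
  exact isOpen_upper hU (h haS) hay

lemma upSetOf_mono [TopologicalSpace α] {S T : Set α} (h : S ⊆ T) :
    upSetOf S ⊆ upSetOf T := by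
  rintro y ⟨a, haS, hay⟩
  exact ⟨a, h haS, hay⟩

lemma isCompact_upSetOf [TopologicalSpace α] {S : Set α} (hS : IsCompact S) :
    IsCompact (upSetOf S) := by
  apply isCompact_of_finite_subcover
  intro ι Us hUs hcov
  rcases hS.elim_finite_subcover Us hUs ((subset_upSetOf S).trans hcov) with ⟨t, ht⟩
  exact ⟨t, upSetOf_subset_open (isOpen_iUnion fun i => isOpen_iUnion fun _ => hUs i) ht⟩

lemma sUpper_upSetOf [TopologicalSpace α] (S : Set α) : SUpper (upSetOf S) := by
  rintro x y ⟨a, haS, hax⟩ hxy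
  exact ⟨a, haS, specLE_trans hax hxy⟩

/-- continuous images of Rudin sets have Rudin closures. -/
theorem stmt_5 {α β : Type u} [TopologicalSpace α] [T0Space α]
    [TopologicalSpace β] [T0Space β]
    (f : α → β) (hf : Continuous f) (A : Set α) (hA : IsRudin A) :
    IsRudin (closure (f '' A)) := by
  obtain ⟨hAne, 𝒦, hK, ⟨hKne, hKfil⟩, hmeet, hmin⟩ := hA
  have hclfA : closure (closure (f '' A)) = closure (f '' A) := closure_closure
  refine ⟨(hAne.image f).closure, {S | ∃ K ∈ 𝒦, S = upSetOf (f '' (K ∩ closure A))}, ?_, ?_, ?_, ?_⟩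
  · rintro S ⟨K, hKmem, rfl⟩
    obtain ⟨x, hxA, hxK⟩ := hmeet K hKmem
    refine ⟨⟨f x, subset_upSetOf _ ⟨x, ⟨hxK, hxA⟩, rfl⟩⟩, ?_, sUpper_upSetOf _⟩
    exact isCompact_upSetOf (((hK K hKmem).2.1.inter_right isClosed_closure).image hf)
  · constructor
    · obtain ⟨K, hKmem⟩ := hKne
      exact ⟨_, K, hKmem, rfl⟩
    · rintro S1 ⟨K1, hK1, rfl⟩ S2 ⟨K2, hK2, rfl⟩
      obtain ⟨K3, hK3, hsub⟩ := hKfil K1 hK1 K2 hK2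
      refine ⟨upSetOf (f '' (K3 ∩ closure A)), ⟨K3, hK3, rfl⟩, subset_inter ?_ ?_⟩
      · exact upSetOf_mono (image_mono (inter_subset_inter_left _ fun x hx => (hsub hx).1))
      · exact upSetOf_mono (image_mono (inter_subset_inter_left _ fun x hx => (hsub hx).2))
  · rintro S ⟨K, hKmem, rfl⟩
    obtain ⟨x, hxA, hxK⟩ := hmeet K hKmem
    refine ⟨f x, ?_, subset_upSetOf _ ⟨x, ⟨hxK, hxA⟩, rfl⟩⟩
    rw [hclfA]
    exact image_closure_subset_closure_image hf ⟨x, hxA, rfl⟩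
  · intro B hB hBsub hBmeet
    rw [hclfA] at hBsub ⊢
    have hC : f ⁻¹' B ∩ closure A = closure A := by
      apply hmin _ (IsClosed.inter (hB.preimage hf) isClosed_closure) inter_subset_right
      intro K hKmem
      obtain ⟨b, hbB, y, ⟨a, ⟨haK, haA⟩, rfl⟩, hab⟩ := hBmeet _ ⟨K, hKmem, rfl⟩
      have : f a ∈ B := closure_minimal (singleton_subset_iff.mpr hbB) hB hab
      exact ⟨a, ⟨this, haA⟩, haK⟩
    apply Subset.antisymm hBsub
    apply closure_minimal _ hB
    rintro y ⟨x, hxA, rfl⟩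
    have : x ∈ f ⁻¹' B ∩ closure A := hC.symm ▸ subset_closure hxA
    exact this.1
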